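/- Let I be a squarefree monomial ideal in k[y₁,…,y_n] with lcm-lattice isomorphic to the finite atomic lattice L̂. Then n ≥ #mi(L), where mi(L) is the set of meet-irreducible elements of L̂ − {0̂,1̂}. -/

import Mathlib

/-- Meet-irreducible proper elements of a bounded lattice. -/
def MeetIrred (L : Type*) [Lattice L] [BoundedOrder L] : Set L :=
  {l | l ≠ ⊥ ∧ l ≠ ⊤ ∧ ∀ a b : L, l = a ⊓ b → l = a ∨ l = b}

/-- The lcm-lattice of the squarefree monomial ideal in `k[y₁,…,y_n]` with
generators `g j` (squarefree monomials identified with their supports). -/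
def lcmLat {n r : ℕ} (g : Fin r → Finset (Fin n)) : Set (Finset (Fin n)) :=
  {S | ∃ T : Finset (Fin r), S = T.sup g}

/-- If a squarefree monomial ideal in `n` variables has lcm-lattice isomorphic
to the finite atomic lattice `L̂`, then `n ≥ #mi(L)`. -/
theorem stmt4 {L : Type*} [CompleteLattice L] [Fintype L] [IsAtomistic L]
    {n r : ℕ} (g : Fin r → Finset (Fin n)) (e : L ≃o ↥(lcmLat g)) :
    (MeetIrred L).ncard ≤ n := by
  classical
  set F : L → Finset (Fin n) := fun x => ((e x : Finset (Fin n))) with hFdef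
  have hFmono : ∀ {x y : L}, x ≤ y → F x ⊆ F y := by
    intro x y h
    exact e.monotone h
  -- union closure
  have hmem_union : ∀ x y : L, F x ∪ F y ∈ lcmLat g := by
    intro x y
    obtain ⟨T, hT⟩ := (e x).2
    obtain ⟨T', hT'⟩ := (e y).2
    refine ⟨T ∪ T', ?_⟩
    have : (T ∪ T').sup g = T.sup g ⊔ T'.sup g := Finset.sup_union
    simp only [hFdef]
    rw [this, ← hT, ← hT']
    rfl
  have hF_sup : ∀ x y : L, F (x ⊔ y) = F x ∪ F y := by
    intro x y
    apply le_antisymm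
    · have hz : x ⊔ y ≤ e.symm ⟨F x ∪ F y, hmem_union x y⟩ := by
        apply sup_le
        · rw [e.le_symm_apply]
          exact Finset.le_iff_subset.mpr (Finset.subset_union_left)
        · rw [e.le_symm_apply]
          exact Finset.le_iff_subset.mpr (Finset.subset_union_right)
      have := e.le_symm_apply.mpr (e.le_symm_apply.mp hz)
      have h2 : e (x ⊔ y) ≤ ⟨F x ∪ F y, hmem_union x y⟩ := by
        rwa [← e.le_symm_apply]
      exact h2
    · exact Finset.union_subset (hFmono le_sup_left) (hFmono le_sup_right)
  have hFbot : F ⊥ = ∅ := by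
    have hmem : (∅ : Finset (Fin n)) ∈ lcmLat g := ⟨∅, by simp⟩
    have : e ⊥ ≤ ⟨∅, hmem⟩ := e.le_symm_apply.mp bot_le
    exact Finset.subset_empty.mp this
  have hFsup_fin : ∀ i : Fin n, ∀ s : Finset L, (∀ x ∈ s, i ∉ F x) → i ∉ F (s.sup id) := by
    intro i s
    induction s using Finset.induction_on with
    | empty => intro _; simp [hFbot]
    | insert a s ha ih =>
      intro h
      rw [Finset.sup_insert, id, hF_sup, Finset.mem_union]
      push_neg
      exact ⟨h _ (Finset.mem_insert_self _ _), ih fun x hx => h x (Finset.mem_insert_of_mem hx)⟩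
  have hFsSup : ∀ i : Fin n, ∀ S : Set L, (∀ x ∈ S, i ∉ F x) → i ∉ F (sSup S) := by
    intro i S h
    have : sSup S = S.toFinset.sup id := by
      rw [Finset.sup_id_eq_sSup, Set.coe_toFinset]
    rw [this]
    exact hFsup_fin i _ fun x hx => h x (Set.mem_toFinset.mp hx)
  -- meet irreducibility over finite infs
  have hirr_fin : ∀ k ∈ MeetIrred L, ∀ s : Finset L, k = s.inf id → ∃ x ∈ s, k = x := by
    intro k hk s
    induction s using Finset.induction_on with
    | empty => intro h; exact absurd (by simpa using h) hk.2.1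
    | insert a s ha ih =>
      intro h
      rw [Finset.inf_insert, id] at h
      rcases hk.2.2 _ _ h with h1 | h2
      · exact ⟨_, Finset.mem_insert_self _ _, h1⟩
      · obtain ⟨x, hx, hkx⟩ := ih h2
        exact ⟨x, Finset.mem_insert_of_mem hx, hkx⟩
  -- each meet-irreducible element has something strictly above the cover inf
  have hcov : ∀ k ∈ MeetIrred L, k < sInf {x : L | k < x} := by
    intro k hk
    have hle : k ≤ sInf {x : L | k < x} := le_sInf fun x hx => hx.le
    rcases hle.lt_or_eq with h | h
    · exact h
    · exfalso
      have hfin : sInf {x : L | k < x} = ({x : L | k < x}.toFinset).inf id := by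
        rw [Finset.inf_id_eq_sInf, Set.coe_toFinset]
      obtain ⟨x, hx, hkx⟩ := hirr_fin k hk _ (h.trans hfin)
      have : k < x := Set.mem_toFinset.mp hx
      rw [← hkx] at this
      exact lt_irrefl k this
  -- separation: pick a variable
  have hsep : ∀ k ∈ MeetIrred L, ∃ i : Fin n, i ∈ F (sInf {x : L | k < x}) ∧ i ∉ F k := by
    intro k hk
    have hlt : e k < e (sInf {x : L | k < x}) := e.strictMono (hcov k hk)
    have hss : F k ⊂ F (sInf {x : L | k < x}) := hlt
    obtain ⟨i, hi1, hi2⟩ := Finset.exists_of_ssubset hss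
    exact ⟨i, hi1, hi2⟩
  -- key: k is determined by the separating variable
  have hkey : ∀ k ∈ MeetIrred L, ∀ i : Fin n,
      i ∈ F (sInf {x : L | k < x}) → i ∉ F k → k = sSup {x : L | i ∉ F x} := by
    intro k hk i hi hni
    have h1 : k ≤ sSup {x : L | i ∉ F x} := le_sSup hni
    rcases h1.lt_or_eq with h | h
    · exfalso
      have h2 : sInf {x : L | k < x} ≤ sSup {x : L | i ∉ F x} := sInf_le h
      have h3 : i ∉ F (sSup {x : L | i ∉ F x}) := hFsSup i _ fun x hx => hx
      exact h3 (hFmono h2 hi)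
    · exact h
  rcases (MeetIrred L).eq_empty_or_nonempty with hE | ⟨k₀, hk₀⟩
  · simp [hE]
  · obtain ⟨i₀, _, _⟩ := hsep k₀ hk₀
    set f : L → Fin n := fun k =>
      if h : k ∈ MeetIrred L then (hsep k h).choose else i₀ with hfdef
    have hinj : Set.InjOn f (MeetIrred L) := by
      intro a ha b hb hab
      have h1 : a = sSup {x : L | f a ∉ F x} := by
        have hc := (hsep a ha).choose_spec
        have : f a = (hsep a ha).choose := by simp [hfdef, ha]
        rw [this]
        exact hkey a ha _ hc.1 hc.2
      have h2 : b = sSup {x : L | f b ∉ F x} := by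
        have hc := (hsep b hb).choose_spec
        have : f b = (hsep b hb).choose := by simp [hfdef, hb]
        rw [this]
        exact hkey b hb _ hc.1 hc.2
      rw [h1, h2, hab]
    calc (MeetIrred L).ncard = (f '' MeetIrred L).ncard :=
          (Set.ncard_image_of_injOn hinj).symm
      _ ≤ (Set.univ : Set (Fin n)).ncard :=
          Set.ncard_le_ncard (Set.subset_univ _) Set.finite_univ
      _ = n := by simp [Set.ncard_univ]
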